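/- Let H be a strongly connected simple digraph with at least one arc, let k be a positive integer, and assume that every tournament not containing k arc-disjoint immersion copies of H admits a vertex ordering of width at most c*k^2 (for a constant c depending on H). Then, for every tournament T that does not contain k arc-disjoint immersion copies of H, there exists a set of at most 6*c*k^2 arcs of T that intersects every immersion copy of H in T. -/

import Mathlib

/-- `A` is the arc relation of a tournament on `V`. -/
def IsTournament {V : Type} (A : V → V → Prop) : Prop :=
  (∀ v, ¬ A v v) ∧ ∀ u v, u ≠ v → (A u v ↔ ¬ A v u)

/-- `l` is a nonempty directed walk (as a list of arcs) from `a` to `b` in the digraph `A`. -/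
def IsArcWalk {V : Type} (A : V → V → Prop) (l : List (V × V)) (a b : V) : Prop :=
  l ≠ [] ∧ (∀ e ∈ l, A e.1 e.2) ∧ List.Chain' (fun e f => e.2 = f.1) l ∧
    l.head?.map Prod.fst = some a ∧ l.getLast?.map Prod.snd = some b

/-- `φ` (on vertices) together with arc-lists `P` (paths for the arcs of `H`) form an
immersion copy of the digraph `H` inside the digraph `A`: vertices map injectively, each
arc of `H` maps to a directed path (a walk without repeated arcs) between the images of its
endpoints, and these paths are pairwise arc-disjoint. -/
def IsImmersionCopy {W V : Type} (H : W → W → Prop) (A : V → V → Prop)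
    (φ : W → V) (P : W → W → List (V × V)) : Prop :=
  Function.Injective φ ∧
  (∀ u v, H u v → IsArcWalk A (P u v) (φ u) (φ v)) ∧
  (∀ u v, H u v → (P u v).Nodup) ∧
  (∀ u v, ¬ H u v → P u v = []) ∧
  (∀ u v u' v', H u v → H u' v' → (u, v) ≠ (u', v') →
    ∀ e, e ∈ P u v → e ∉ P u' v')

/-- The arcs of an immersion copy: all arcs used by the paths. -/
def copyArcs {W V : Type} (P : W → W → List (V × V)) : Set (V × V) :=
  {e | ∃ u v, e ∈ P u v}

/-- The vertices of an immersion copy: the images of vertices together with all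
endpoints of arcs used by the paths. -/
def copyVerts {W V : Type} (φ : W → V) (P : W → W → List (V × V)) : Set V :=
  Set.range φ ∪ {x | ∃ e ∈ copyArcs P, x = e.1 ∨ x = e.2}

/-- The arcs of `A` crossing backwards over position `α` of the ordering `σ`
(`σ` is 0-based: these are the arcs `(u,v)` with `σ v ≤ α < σ u`). -/
def cutSet {V : Type} (A : V → V → Prop) {n : ℕ} (σ : V ≃ Fin n) (α : ℕ) : Set (V × V) :=
  {e | A e.1 e.2 ∧ (σ e.2 : ℕ) ≤ α ∧ α < (σ e.1 : ℕ)}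

/-- The digraph with arc relation `A` contains `k` pairwise arc-disjoint immersion copies
of `H`. -/
def HasImmPacking {W V : Type} (H : W → W → Prop) (A : V → V → Prop) (k : ℕ) : Prop :=
  ∃ (φs : Fin k → W → V) (Ps : Fin k → W → W → List (V × V)),
    (∀ t, IsImmersionCopy H A (φs t) (Ps t)) ∧
    ∀ t t', t ≠ t' → Disjoint (copyArcs (Ps t)) (copyArcs (Ps t'))

namespace Stmt19Aux

variable {W V V' : Type}

lemma arc_fst_mem {φ : W → V} {P : W → W → List (V × V)} {e : V × V}
    (he : e ∈ copyArcs P) : e.1 ∈ copyVerts φ P :=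
  Or.inr ⟨e, he, Or.inl rfl⟩

lemma arc_snd_mem {φ : W → V} {P : W → W → List (V × V)} {e : V × V}
    (he : e ∈ copyArcs P) : e.2 ∈ copyVerts φ P :=
  Or.inr ⟨e, he, Or.inr rfl⟩

lemma phi_mem {φ : W → V} {P : W → W → List (V × V)} (u : W) :
    φ u ∈ copyVerts φ P :=
  Or.inl ⟨u, rfl⟩

lemma copy_mono {H : W → W → Prop} {A A' : V → V → Prop}
    (h : ∀ x y, A x y → A' x y) {φ P}
    (hc : IsImmersionCopy H A φ P) : IsImmersionCopy H A' φ P := by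
  obtain ⟨h1, h2, h3, h4, h5⟩ := hc
  refine ⟨h1, fun u v huv => ?_, h3, h4, h5⟩
  obtain ⟨w1, w2, w3, w4, w5⟩ := h2 u v huv
  exact ⟨w1, fun e he => h _ _ (w2 e he), w3, w4, w5⟩

lemma walk_reach {R : V → V → Prop} :
    ∀ (l : List (V × V)) (a b : V), (∀ e ∈ l, R e.1 e.2) →
      List.Chain' (fun e f => e.2 = f.1) l →
      l.head?.map Prod.fst = some a → l.getLast?.map Prod.snd = some b →
      ∀ e ∈ l, Relation.ReflTransGen R a e.1 ∧ Relation.ReflTransGen R e.2 b := by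
  intro l
  induction l with
  | nil => intro a b _ _ _ _ e he; simp at he
  | cons x t ih =>
    intro a b harcs hchain hhead hlast e he
    have hxa : x.1 = a := by simpa using hhead
    cases t with
    | nil =>
      simp only [List.mem_singleton] at he
      subst he
      have hb : e.2 = b := by simpa using hlast
      exact ⟨hxa ▸ Relation.ReflTransGen.refl, hb ▸ Relation.ReflTransGen.refl⟩
    | cons y t' =>
      have hxy : x.2 = y.1 := (List.isChain_cons_cons.mp hchain).1
      have hchain' : List.Chain' (fun e f => e.2 = f.1) (y :: t') :=
        (List.isChain_cons_cons.mp hchain).2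
      have harcs' : ∀ e ∈ (y :: t'), R e.1 e.2 := fun e he => harcs e (List.mem_cons_of_mem _ he)
      have hlast' : (y :: t').getLast?.map Prod.snd = some b := by
        rwa [List.getLast?_cons_cons] at hlast
      have hih := ih x.2 b harcs' hchain' (by simp [hxy]) hlast'
      rcases List.mem_cons.mp he with rfl | he'
      · refine ⟨hxa ▸ Relation.ReflTransGen.refl, ?_⟩
        rw [hxy]
        exact Relation.ReflTransGen.head (harcs' y (List.mem_cons_self))
          (hih y (List.mem_cons_self)).2
      · obtain ⟨r1, r2⟩ := hih e he'
        refine ⟨?_, r2⟩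
        have : R a x.2 := hxa ▸ harcs x (List.mem_cons_self)
        exact Relation.ReflTransGen.head this r1

/-- Every arc used in a copy comes from a path of a genuine arc of `H`. -/
lemma copyArcs_arc {H : W → W → Prop} {A : V → V → Prop} {φ P}
    (hc : IsImmersionCopy H A φ P) {e : V × V} (he : e ∈ copyArcs P) :
    ∃ u v, H u v ∧ e ∈ P u v := by
  obtain ⟨u, v, hm⟩ := he
  by_cases h : H u v
  · exact ⟨u, v, h, hm⟩
  · rw [hc.2.2.2.1 u v h] at hm; simp at hm

lemma copy_reach {H : W → W → Prop} {A : V → V → Prop}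
    (hstrong : ∀ u v, Relation.ReflTransGen H u v) {φ P}
    (hc : IsImmersionCopy H A φ P) :
    ∀ x ∈ copyVerts φ P, ∀ y ∈ copyVerts φ P,
      Relation.ReflTransGen (fun a b => (a, b) ∈ copyArcs P) x y := by
  set R : V → V → Prop := fun a b => (a, b) ∈ copyArcs P with hR
  have hwalks : ∀ u v, H u v → ∀ e ∈ P u v,
      Relation.ReflTransGen R (φ u) e.1 ∧ Relation.ReflTransGen R e.2 (φ v) := by
    intro u v huv
    obtain ⟨hne, harcs, hchain, hhead, hlast⟩ := hc.2.1 u v huv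
    exact walk_reach (P u v) (φ u) (φ v)
      (fun e he => ⟨u, v, he⟩) hchain hhead hlast
  have reach_phi : ∀ u v, H u v → Relation.ReflTransGen R (φ u) (φ v) := by
    intro u v huv
    obtain ⟨hne, harcs, hchain, hhead, hlast⟩ := hc.2.1 u v huv
    have hmem : (P u v).getLast hne ∈ P u v := List.getLast_mem hne
    obtain ⟨r1, r2⟩ := hwalks u v huv _ hmem
    have : R ((P u v).getLast hne).1 ((P u v).getLast hne).2 := ⟨u, v, hmem⟩
    exact Relation.ReflTransGen.trans (r1.tail this) r2
  have phi_phi : ∀ u v, Relation.ReflTransGen R (φ u) (φ v) := by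
    intro u v
    induction hstrong u v with
    | refl => exact Relation.ReflTransGen.refl
    | tail _ h ih => exact Relation.ReflTransGen.trans ih (reach_phi _ _ h)
  have key : ∀ x ∈ copyVerts φ P,
      (∃ w, Relation.ReflTransGen R (φ w) x) ∧
      (∃ w, Relation.ReflTransGen R x (φ w)) := by
    intro x hx
    rcases hx with ⟨w, rfl⟩ | ⟨e, he, hxe⟩
    · exact ⟨⟨w, Relation.ReflTransGen.refl⟩, ⟨w, Relation.ReflTransGen.refl⟩⟩
    · obtain ⟨u, v, huv, hm⟩ := copyArcs_arc hc he
      obtain ⟨r1, r2⟩ := hwalks u v huv e hm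
      have hRe : R e.1 e.2 := ⟨u, v, hm⟩
      rcases hxe with rfl | rfl
      · exact ⟨⟨u, r1⟩, ⟨v, Relation.ReflTransGen.trans (Relation.ReflTransGen.single hRe) r2⟩⟩
      · exact ⟨⟨u, r1.tail hRe⟩, ⟨v, r2⟩⟩
  intro x hx y hy
  obtain ⟨-, wx, rx⟩ := key x hx
  obtain ⟨⟨wy, ry⟩, -⟩ := key y hy
  exact Relation.ReflTransGen.trans rx (Relation.ReflTransGen.trans (phi_phi wx wy) ry)

lemma cross_arc {R : V → V → Prop} {g : V → ℕ} {x y : V} {β : ℕ}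
    (h : Relation.ReflTransGen R x y) (hx : β < g x) (hy : g y ≤ β) :
    ∃ a b, R a b ∧ g b ≤ β ∧ β < g a := by
  induction h with
  | refl => omega
  | tail hxm hmy ih =>
    rename_i mvar yvar
    by_cases hm : g mvar ≤ β
    · exact ih hm
    · exact ⟨mvar, yvar, hmy, hy, by omega⟩

lemma copyArcs_map (P : W → W → List (V × V)) (g : V × V → V' × V') :
    copyArcs (fun u v => (P u v).map g) = g '' copyArcs P := by
  ext e
  constructor
  · rintro ⟨u, v, hm⟩
    obtain ⟨a, ha, rfl⟩ := List.mem_map.mp hm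
    exact ⟨a, ⟨u, v, ha⟩, rfl⟩
  · rintro ⟨a, ⟨u, v, ha⟩, rfl⟩
    exact ⟨u, v, List.mem_map_of_mem ha⟩

lemma map_copyVerts (φ : W → V) (P : W → W → List (V × V)) (f : V → V') :
    copyVerts (f ∘ φ) (fun u v => (P u v).map (Prod.map f f)) ⊆ f '' copyVerts φ P := by
  rintro x (⟨w, rfl⟩ | ⟨e, he, hxe⟩)
  · exact ⟨φ w, phi_mem w, rfl⟩
  · rw [copyArcs_map] at he
    obtain ⟨a, ha, rfl⟩ := he
    rcases hxe with rfl | rfl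
    · exact ⟨a.1, arc_fst_mem ha, rfl⟩
    · exact ⟨a.2, arc_snd_mem ha, rfl⟩

lemma map_copy {H : W → W → Prop} {A : V → V → Prop} {A' : V' → V' → Prop}
    {f : V → V'} {S : Set V} (hinj : Set.InjOn f S)
    (hA : ∀ x ∈ S, ∀ y ∈ S, A x y → A' (f x) (f y))
    {φ P} (hc : IsImmersionCopy H A φ P) (hV : copyVerts φ P ⊆ S) :
    IsImmersionCopy H A' (f ∘ φ) (fun u v => (P u v).map (Prod.map f f)) := by
  obtain ⟨h1, h2, h3, h4, h5⟩ := hc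
  have hcopy : IsImmersionCopy H A φ P := ⟨h1, h2, h3, h4, h5⟩
  have hendS : ∀ u v, H u v → ∀ e ∈ P u v, e.1 ∈ S ∧ e.2 ∈ S := by
    intro u v huv e he
    exact ⟨hV (arc_fst_mem ⟨u, v, he⟩), hV (arc_snd_mem ⟨u, v, he⟩)⟩
  refine ⟨?_, ?_, ?_, ?_, ?_⟩
  · intro a b hab
    exact h1 (hinj (hV (phi_mem a)) (hV (phi_mem b)) hab)
  · intro u v huv
    obtain ⟨hne, harcs, hchain, hhead, hlast⟩ := h2 u v huv
    refine ⟨by simpa using hne, ?_, ?_, ?_, ?_⟩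
    · intro e he
      obtain ⟨a, ha, rfl⟩ := List.mem_map.mp he
      obtain ⟨hs1, hs2⟩ := hendS u v huv a ha
      exact hA _ hs1 _ hs2 (harcs a ha)
    · show List.IsChain _ _; rw [List.isChain_map]
      exact hchain.imp (fun a b h => by simp [Prod.map, h])
    · rw [List.head?_map]
      obtain ⟨a, ha1, ha2⟩ := Option.map_eq_some_iff.mp hhead
      simp [ha1, ← ha2]
    · rw [List.getLast?_map]
      obtain ⟨a, ha1, ha2⟩ := Option.map_eq_some_iff.mp hlast
      simp [ha1, ← ha2]
  · intro u v huv
    refine List.Nodup.map_on ?_ (h3 u v huv)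
    intro a ha b hb hab
    obtain ⟨ha1, ha2⟩ := hendS u v huv a ha
    obtain ⟨hb1, hb2⟩ := hendS u v huv b hb
    have e1 : f a.1 = f b.1 := congrArg Prod.fst hab
    have e2 : f a.2 = f b.2 := congrArg Prod.snd hab
    exact Prod.ext (hinj ha1 hb1 e1) (hinj ha2 hb2 e2)
  · intro u v huv
    simp only [h4 u v huv, List.map_nil]
  · intro u v u' v' huv huv' hneq e he he'
    obtain ⟨a, ha, rfl⟩ := List.mem_map.mp he
    obtain ⟨b, hb, hba⟩ := List.mem_map.mp he'
    obtain ⟨ha1, ha2⟩ := hendS u v huv a ha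
    obtain ⟨hb1, hb2⟩ := hendS u' v' huv' b hb
    have : b = a := by
      have e1 : f b.1 = f a.1 := congrArg Prod.fst hba
      have e2 : f b.2 = f a.2 := congrArg Prod.snd hba
      exact Prod.ext (hinj hb1 ha1 e1) (hinj hb2 ha2 e2)
    exact h5 u v u' v' huv huv' hneq a ha (this ▸ hb)

/-- A packing of `k` copies all of whose vertices lie in `S`. -/
def PackIn {W V : Type} (H : W → W → Prop) (A : V → V → Prop) (S : Set V) (k : ℕ) : Prop :=
  ∃ (φs : Fin k → W → V) (Ps : Fin k → W → W → List (V × V)),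
    (∀ t, IsImmersionCopy H A (φs t) (Ps t) ∧ copyVerts (φs t) (Ps t) ⊆ S) ∧
    ∀ t t', t ≠ t' → Disjoint (copyArcs (Ps t)) (copyArcs (Ps t'))

lemma subLemma {m : ℕ} (H : Fin m → Fin m → Prop) (harc : ∃ u v, H u v)
    {n : ℕ} (T : Fin n → Fin n → Prop) (hT : IsTournament T)
    (S : Set (Fin n)) (k' B : ℕ)
    (ih : ∀ (n' : ℕ) (T' : Fin n' → Fin n' → Prop), IsTournament T' →
      ¬ HasImmPacking H T' k' →
      ∃ F' : Set (Fin n' × Fin n'), F' ⊆ {e | T' e.1 e.2} ∧ F'.ncard ≤ B ∧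
        ∀ φ P, ¬ IsImmersionCopy H (fun a b => T' a b ∧ (a, b) ∉ F') φ P)
    (hS : ¬ PackIn H T S k') :
    ∃ F : Set (Fin n × Fin n), F ⊆ {e | T e.1 e.2} ∧ F.ncard ≤ B ∧
      ∀ φ P, copyVerts φ P ⊆ S →
        ¬ IsImmersionCopy H (fun a b => T a b ∧ (a, b) ∉ F) φ P := by
  classical
  haveI : Fintype S := Fintype.ofFinite _
  set n' := Fintype.card S with hn'def
  let eqv : S ≃ Fin n' := Fintype.equivFin S
  let ι : Fin n' → Fin n := fun i => (eqv.symm i : Fin n)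
  have hι : Function.Injective ι := fun a b h => by
    have := eqv.symm.injective (Subtype.ext h)
    exact this
  have hιS : ∀ i, ι i ∈ S := fun i => (eqv.symm i).2
  set T' : Fin n' → Fin n' → Prop := fun a b => T (ι a) (ι b) with hT'def
  have hT' : IsTournament T' := by
    constructor
    · intro v; exact hT.1 (ι v)
    · intro u v huv; exact hT.2 (ι u) (ι v) (fun h => huv (hι h))
  have hprodinj : Function.Injective (Prod.map ι ι) := fun a b h => by
    have h1 := congrArg Prod.fst h
    have h2 := congrArg Prod.snd h
    exact Prod.ext (hι h1) (hι h2)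
  have hnp' : ¬ HasImmPacking H T' k' := by
    rintro ⟨φs, Ps, hcop, hdisj⟩
    apply hS
    refine ⟨fun t => ι ∘ φs t, fun t u v => ((Ps t) u v).map (Prod.map ι ι),
      fun t => ⟨?_, ?_⟩, ?_⟩
    · exact map_copy (S := Set.univ) (hι.injOn) (fun x _ y _ h => h) (hcop t)
        (fun _ _ => trivial)
    · refine (map_copyVerts _ _ _).trans ?_
      rintro x ⟨a, -, rfl⟩; exact hιS _
    · intro t t' htt'
      rw [Set.disjoint_left]
      intro e he he'
      rw [copyArcs_map] at he he'
      obtain ⟨a, ha, rfl⟩ := he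
      obtain ⟨b, hb, hba⟩ := he'
      exact (Set.disjoint_left.mp (hdisj t t' htt')) ha (hprodinj hba ▸ hb)
  obtain ⟨F', hF1, hF2, hF3⟩ := ih n' T' hT' hnp'
  refine ⟨(Prod.map ι ι) '' F', ?_, ?_, ?_⟩
  · rintro e ⟨a, ha, rfl⟩
    exact hF1 ha
  · exact le_trans (Set.ncard_image_le) hF2
  · intro φ P hV hcopy
    obtain ⟨u₀, v₀, hu₀v₀⟩ := harc
    have hφS : φ u₀ ∈ S := hV (phi_mem u₀)
    haveI : Nonempty S := ⟨⟨φ u₀, hφS⟩⟩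
    have hn'pos : 0 < n' := Fintype.card_pos
    let ρ : Fin n → Fin n' := fun x => if h : x ∈ S then eqv ⟨x, h⟩ else ⟨0, hn'pos⟩
    have hρι : ∀ x ∈ S, ι (ρ x) = x := by
      intro x hx
      simp only [ρ, dif_pos hx, ι, Equiv.symm_apply_apply]
    have hρinj : Set.InjOn ρ S := by
      intro x hx y hy hxy
      rw [← hρι x hx, ← hρι y hy, hxy]
    have hA : ∀ x ∈ S, ∀ y ∈ S, (T x y ∧ (x, y) ∉ (Prod.map ι ι) '' F') →
        (T' (ρ x) (ρ y) ∧ (ρ x, ρ y) ∉ F') := by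
      intro x hx y hy ⟨hxy, hmem⟩
      constructor
      · show T (ι (ρ x)) (ι (ρ y))
        rw [hρι x hx, hρι y hy]; exact hxy
      · intro hin
        exact hmem ⟨(ρ x, ρ y), hin, by simp [Prod.map, hρι x hx, hρι y hy]⟩
    exact hF3 (ρ ∘ φ) (fun u v => (P u v).map (Prod.map ρ ρ))
      (map_copy hρinj hA hcopy hV)
lemma arith {c k k1 k2 : ℕ} (hk : 2 ≤ k) (hk2 : k2 = k / 2) (hk1 : k1 = k - k2) :
    6 * c * k1 ^ 2 + 6 * c * k2 ^ 2 + c * k ^ 2 + c * k ^ 2 ≤ 6 * c * k ^ 2 := by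
  have h1 : 1 ≤ k2 := by omega
  have hcase : k = 2 * k2 ∨ k = 2 * k2 + 1 := by omega
  rcases hcase with h | h
  · have e1 : k1 = k2 := by omega
    rw [e1, h]; ring_nf; nlinarith [sq_nonneg k2]
  · have e1 : k1 = k2 + 1 := by omega
    rw [e1, h]; ring_nf
    have h2 : 1 ≤ k2 ^ 2 := Nat.one_le_pow _ _ (by omega)
    nlinarith [h2, h1]

lemma mainLemma {m : ℕ} (H : Fin m → Fin m → Prop)
    (hsimple : ∀ v, ¬ H v v)
    (hstrong : ∀ u v, Relation.ReflTransGen H u v)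
    (harc : ∃ u v, H u v)
    (c : ℕ)
    (hhyp : ∀ (k : ℕ), 1 ≤ k → ∀ (n : ℕ) (T : Fin n → Fin n → Prop),
      IsTournament T → ¬ HasImmPacking H T k →
      ∃ σ : Fin n ≃ Fin n, ∀ α : ℕ, (cutSet T σ α).ncard ≤ c * k ^ 2) :
    ∀ (k : ℕ), 1 ≤ k → ∀ (n : ℕ) (T : Fin n → Fin n → Prop), IsTournament T →
      ¬ HasImmPacking H T k →
      ∃ F : Set (Fin n × Fin n), F ⊆ {e | T e.1 e.2} ∧ F.ncard ≤ 6 * c * k ^ 2 ∧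
        ∀ (φ : Fin m → Fin n) (P : Fin m → Fin m → List (Fin n × Fin n)),
          ¬ IsImmersionCopy H (fun a b => T a b ∧ (a, b) ∉ F) φ P := by
  intro k
  induction k using Nat.strong_induction_on with
  | _ k ih =>
  intro hk n T hT hnopack
  classical
  rcases eq_or_lt_of_le hk with heq | hk2
  · -- k = 1
    refine ⟨∅, by simp, by simp, ?_⟩
    intro φ P hcopy
    apply hnopack
    rw [← heq]
    refine ⟨fun _ => φ, fun _ => P,
      fun t => copy_mono (fun x y h => h.1) hcopy, ?_⟩
    intro t t' htt'
    exact absurd (Subsingleton.elim t t') htt'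
  · -- k ≥ 2
    set k₂ := k / 2 with hk₂def
    set k₁ := k - k₂ with hk₁def
    have hk₁ : 1 ≤ k₁ := by omega
    have hk₂pos : 1 ≤ k₂ := by omega
    have hk₁lt : k₁ < k := by omega
    have hk₂lt : k₂ < k := by omega
    obtain ⟨σ, hσ⟩ := hhyp k hk n T hT hnopack
    by_cases hcase : HasImmPacking H T k₁
    · -- there is a k₁-packing somewhere; find minimal prefix
      have hQn : PackIn H T {v | (σ v : ℕ) ≤ n} k₁ := by
        obtain ⟨φs, Ps, h1, h2⟩ := hcase
        exact ⟨φs, Ps, fun t => ⟨h1 t, fun x _ => le_of_lt (σ x).2⟩, h2⟩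
      have hex : ∃ α, PackIn H T {v | (σ v : ℕ) ≤ α} k₁ := ⟨n, hQn⟩
      set α := Nat.find hex with hαdef
      have hQα : PackIn H T {v | (σ v : ℕ) ≤ α} k₁ := Nat.find_spec hex
      have hmin : ∀ β < α, ¬ PackIn H T {v | (σ v : ℕ) ≤ β} k₁ :=
        fun β hβ => Nat.find_min hex hβ
      set S₁ : Set (Fin n) := {v | (σ v : ℕ) < α} with hS₁def
      set S₂ : Set (Fin n) := {v | α < (σ v : ℕ)} with hS₂def
      have hnp₁ : ¬ PackIn H T S₁ k₁ := by
        rcases Nat.eq_zero_or_pos α with h0 | hpos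
        · rintro ⟨φs, Ps, h1, h2⟩
          obtain ⟨u, v, huv⟩ := harc
          have := (h1 ⟨0, by omega⟩).2 (phi_mem u)
          rw [hS₁def, h0] at this
          simp at this
        · intro hp
          have hset : S₁ = {v : Fin n | (σ v : ℕ) ≤ α - 1} := by
            ext v; simp only [hS₁def, Set.mem_setOf_eq]; omega
          exact hmin (α - 1) (by omega) (hset ▸ hp)
      have hnp₂ : ¬ PackIn H T S₂ k₂ := by
        rintro ⟨φs2, Ps2, g1, g2⟩
        obtain ⟨φs1, Ps1, f1, f2⟩ := hQα
        apply hnopack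
        have hkk : k = k₁ + k₂ := by omega
        let idx : Fin k → Fin k₁ ⊕ Fin k₂ := fun t => finSumFinEquiv.symm (finCongr hkk t)
        have hidxinj : Function.Injective idx :=
          finSumFinEquiv.symm.injective.comp (finCongr hkk).injective
        refine ⟨fun t => Sum.elim φs1 φs2 (idx t),
          fun t => Sum.elim Ps1 Ps2 (idx t), ?_, ?_⟩
        · intro t
          rcases h : idx t with t1 | t2
          · simpa [h] using (f1 t1).1
          · simpa [h] using (g1 t2).1
        · intro t t' htt'
          have hdisj12 : ∀ a b, Disjoint (copyArcs (Ps1 a)) (copyArcs (Ps2 b)) := by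
            intro a b
            rw [Set.disjoint_left]
            intro e he he'
            have m1 : e.1 ∈ copyVerts (φs1 a) (Ps1 a) := arc_fst_mem he
            have m2 : e.1 ∈ copyVerts (φs2 b) (Ps2 b) := arc_fst_mem he'
            have d1 : (σ e.1 : ℕ) ≤ α := (f1 a).2 m1
            have d2 : α < (σ e.1 : ℕ) := (g1 b).2 m2
            omega
          rcases h : idx t with t1 | t2 <;> rcases h' : idx t' with t1' | t2' <;>
            simp only [h, h', Sum.elim_inl, Sum.elim_inr]
          · refine f2 t1 t1' (fun he => htt' ?_)
            exact hidxinj (by rw [h, h', he])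
          · exact hdisj12 t1 t2'
          · exact (hdisj12 t1' t2).symm
          · refine g2 t2 t2' (fun he => htt' ?_)
            exact hidxinj (by rw [h, h', he])
      obtain ⟨F₁, f11, f12, f13⟩ := subLemma H harc T hT S₁ k₁ (6 * c * k₁ ^ 2)
        (ih k₁ hk₁lt hk₁) hnp₁
      obtain ⟨F₂, f21, f22, f23⟩ := subLemma H harc T hT S₂ k₂ (6 * c * k₂ ^ 2)
        (ih k₂ hk₂lt hk₂pos) hnp₂
      set C₁ := cutSet T σ (α - 1) with hC₁def
      set C₂ := cutSet T σ α with hC₂def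
      set F : Set (Fin n × Fin n) := F₁ ∪ F₂ ∪ C₁ ∪ C₂ with hFdef
      refine ⟨F, ?_, ?_, ?_⟩
      · rintro e ((( h | h ) | h ) | h)
        · exact f11 h
        · exact f21 h
        · exact h.1
        · exact h.1
      · calc F.ncard ≤ (F₁ ∪ F₂ ∪ C₁).ncard + C₂.ncard := Set.ncard_union_le _ _
          _ ≤ (F₁ ∪ F₂).ncard + C₁.ncard + C₂.ncard := by
              have := Set.ncard_union_le (F₁ ∪ F₂) C₁; omega
          _ ≤ F₁.ncard + F₂.ncard + C₁.ncard + C₂.ncard := by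
              have := Set.ncard_union_le F₁ F₂; omega
          _ ≤ 6 * c * k₁ ^ 2 + 6 * c * k₂ ^ 2 + c * k ^ 2 + c * k ^ 2 := by
              have e1 : C₁.ncard ≤ c * k ^ 2 := hσ (α - 1)
              have e2 : C₂.ncard ≤ c * k ^ 2 := hσ α
              omega
          _ ≤ 6 * c * k ^ 2 := arith (by omega) hk₂def hk₁def
      · intro φ P hcopy
        have harcsT : ∀ e ∈ copyArcs P, T e.1 e.2 ∧ (e.1, e.2) ∉ F := by
          intro e he
          obtain ⟨u, v, huv, hm⟩ := copyArcs_arc hcopy he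
          exact (hcopy.2.1 u v huv).2.1 e hm
        by_cases hv1 : copyVerts φ P ⊆ S₁
        · exact f13 φ P hv1 (copy_mono (fun x y h =>
            ⟨h.1, fun hm => h.2 (Or.inl (Or.inl (Or.inl hm)))⟩) hcopy)
        · by_cases hv2 : copyVerts φ P ⊆ S₂
          · exact f23 φ P hv2 (copy_mono (fun x y h =>
              ⟨h.1, fun hm => h.2 (Or.inl (Or.inl (Or.inr hm)))⟩) hcopy)
          · -- get crossing vertices
            obtain ⟨x, hxV, hx⟩ := Set.not_subset.mp hv1
            obtain ⟨y, hyV, hy⟩ := Set.not_subset.mp hv2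
            simp only [hS₁def, hS₂def, Set.mem_setOf_eq, not_lt] at hx hy
            by_cases hA : ∃ z ∈ copyVerts φ P, (σ z : ℕ) < α
            · obtain ⟨z, hzV, hz⟩ := hA
              have hreach := copy_reach hstrong hcopy x hxV z hzV
              obtain ⟨a, b, hab, hb, ha⟩ := cross_arc (g := fun v => (σ v : ℕ))
                (β := α - 1) hreach (by show α - 1 < (σ x : ℕ); omega)
                (by show (σ z : ℕ) ≤ α - 1; omega)
              have hTab := harcsT (a, b) hab
              exact hTab.2 (Or.inl (Or.inr ⟨hTab.1, hb, ha⟩))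
            · by_cases hB : ∃ z ∈ copyVerts φ P, α < (σ z : ℕ)
              · obtain ⟨z, hzV, hz⟩ := hB
                have hreach := copy_reach hstrong hcopy z hzV y hyV
                obtain ⟨a, b, hab, hb, ha⟩ := cross_arc (g := fun v => (σ v : ℕ))
                  (β := α) hreach (by show α < (σ z : ℕ); omega)
                  (by show (σ y : ℕ) ≤ α; omega)
                have hTab := harcsT (a, b) hab
                exact hTab.2 (Or.inr ⟨hTab.1, hb, ha⟩)
              · push_neg at hA hB
                obtain ⟨u, v, huv⟩ := harc
                have hne : P u v ≠ [] := (hcopy.2.1 u v huv).1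
                have hm : (P u v).head hne ∈ P u v := List.head_mem hne
                set e := (P u v).head hne with hedef
                have he : e ∈ copyArcs P := ⟨u, v, hm⟩
                have hT12 := (harcsT e he).1
                have h1 : (σ e.1 : ℕ) = α := le_antisymm (hB _ (arc_fst_mem he)) (hA _ (arc_fst_mem he))
                have h2 : (σ e.2 : ℕ) = α := le_antisymm (hB _ (arc_snd_mem he)) (hA _ (arc_snd_mem he))
                have : e.1 = e.2 := σ.injective (Fin.ext (by omega))
                exact hT.1 e.1 (this ▸ hT12)
    · obtain ⟨F, h1, h2, h3⟩ := ih k₁ hk₁lt hk₁ n T hT hcase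
      refine ⟨F, h1, le_trans h2 ?_, h3⟩
      have : k₁ ≤ k := by omega
      exact Nat.mul_le_mul_left _ (Nat.pow_le_pow_left this 2)
end Stmt19Aux


/-- Let `H` be a strongly connected simple digraph with at least one arc, and assume that
for every `k ≥ 1`, every tournament not containing `k` arc-disjoint immersion copies of
`H` admits a vertex ordering of width at most `c * k²`. Then for every `k ≥ 1` and every
tournament `T` that does not contain `k` arc-disjoint immersion copies of `H`, there is a
set of at most `6 c k²` arcs of `T` intersecting every immersion copy of `H` in `T`. -/
theorem stmt19 {m : ℕ} (H : Fin m → Fin m → Prop)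
    (hsimple : ∀ v, ¬ H v v)
    (hstrong : ∀ u v, Relation.ReflTransGen H u v)
    (harc : ∃ u v, H u v)
    (c : ℕ)
    (hhyp : ∀ (k : ℕ), 1 ≤ k → ∀ (n : ℕ) (T : Fin n → Fin n → Prop),
      IsTournament T → ¬ HasImmPacking H T k →
      ∃ σ : Fin n ≃ Fin n, ∀ α : ℕ, (cutSet T σ α).ncard ≤ c * k ^ 2)
    (k : ℕ) (hk : 1 ≤ k)
    (n : ℕ) (T : Fin n → Fin n → Prop) (hT : IsTournament T)
    (hnopack : ¬ HasImmPacking H T k) :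
    ∃ F : Set (Fin n × Fin n), F ⊆ {e | T e.1 e.2} ∧ F.ncard ≤ 6 * c * k ^ 2 ∧
      ∀ (φ : Fin m → Fin n) (P : Fin m → Fin m → List (Fin n × Fin n)),
        ¬ IsImmersionCopy H (fun a b => T a b ∧ (a, b) ∉ F) φ P :=
  Stmt19Aux.mainLemma H hsimple hstrong harc c hhyp k hk n T hT hnopack
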